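/- Let G be a non-constant multi-GGS group. Then the normaliser of the directed group B in Aut(X*) stabilises the vertex 0 of the first layer, and the section map at 0 maps Nor(B) into Nor(B) and Cen(B) into Cen(B). -/

import Mathlib

/-!  Automorphisms of the `p`-regular rooted tree `X*`, `X = {0, …, p-1} = ℤ/pℤ`, encoded by
their portraits: an automorphism is the collection of its labels `g|^v ∈ Sym(X)`, `v ∈ X*`. -/

/-- The automorphism group of the `p`-regular rooted tree, encoded via portraits. -/
def TreeAut (p : ℕ) := List (ZMod p) → Equiv.Perm (ZMod p)

instance {p : ℕ} : CoeFun (TreeAut p) (fun _ => List (ZMod p) → Equiv.Perm (ZMod p)) :=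
  ⟨fun g => g⟩

/-- The action of a portrait on the words of the tree. -/
def pact {p : ℕ} : TreeAut p → List (ZMod p) → List (ZMod p)
  | _, [] => []
  | L, x :: v => L [] x :: pact (fun w => L (x :: w)) v

/-- The inverse action of a portrait on the words of the tree. -/
def pactInv {p : ℕ} : TreeAut p → List (ZMod p) → List (ZMod p)
  | _, [] => []
  | L, y :: v => (L [])⁻¹ y :: pactInv (fun w => L ((L [])⁻¹ y :: w)) v

theorem pactInv_pact {p : ℕ} (L : TreeAut p) (v : List (ZMod p)) :
    pactInv L (pact L v) = v := by
  induction v generalizing L with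
  | nil => rfl
  | cons x v ih =>
    simp [pact, pactInv]
    exact ih _

theorem pact_pactInv {p : ℕ} (L : TreeAut p) (v : List (ZMod p)) :
    pact L (pactInv L v) = v := by
  induction v generalizing L with
  | nil => rfl
  | cons x v ih =>
    simp [pact, pactInv]
    exact ih _

theorem pact_one {p : ℕ} (v : List (ZMod p)) :
    pact (fun _ => 1 : TreeAut p) v = v := by
  induction v with
  | nil => rfl
  | cons x v ih => simpa [pact] using ih

theorem pact_mulP {p : ℕ} (L M : TreeAut p) (v : List (ZMod p)) :
    pact (fun u => L (pact M u) * M u) v = pact L (pact M v) := by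
  induction v generalizing L M with
  | nil => rfl
  | cons x v ih =>
    simp only [pact, Equiv.Perm.mul_apply]
    exact congrArg _ (ih (fun u => L ((M []) x :: u)) (fun w => M (x :: w)))

instance {p : ℕ} : One (TreeAut p) := ⟨fun _ => 1⟩
instance {p : ℕ} : Mul (TreeAut p) := ⟨fun L M => fun v => L (pact M v) * M v⟩
instance {p : ℕ} : Inv (TreeAut p) := ⟨fun L => fun v => (L (pactInv L v))⁻¹⟩

theorem TreeAut.mul_def {p : ℕ} (L M : TreeAut p) (v : List (ZMod p)) :
    (L * M) v = L (pact M v) * M v := rfl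
theorem TreeAut.one_def {p : ℕ} (v : List (ZMod p)) : (1 : TreeAut p) v = 1 := rfl
theorem TreeAut.inv_def {p : ℕ} (L : TreeAut p) (v : List (ZMod p)) :
    L⁻¹ v = (L (pactInv L v))⁻¹ := rfl

instance {p : ℕ} : Group (TreeAut p) where
  mul_assoc a b c := by
    funext v
    show (a * b) (pact c v) * c v = a (pact (b * c) v) * ((b * c) v)
    show a (pact b (pact c v)) * b (pact c v) * c v
        = a (pact (fun u => b (pact c u) * c u) v) * (b (pact c v) * c v)
    rw [pact_mulP, mul_assoc]
  one_mul a := by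
    funext v
    show (1 : TreeAut p) (pact a v) * a v = a v
    simp [TreeAut.one_def]
  mul_one a := by
    funext v
    show a (pact (fun _ => 1) v) * (1 : Equiv.Perm (ZMod p)) = a v
    rw [pact_one, mul_one]
  inv_mul_cancel a := by
    funext v
    show (a (pactInv a (pact a v)))⁻¹ * a v = (1 : TreeAut p) v
    rw [pactInv_pact, TreeAut.one_def, inv_mul_cancel]

/-- The rooted automorphism with label `σ` at the root and trivial labels elsewhere. -/
def rootedAut {p : ℕ} (σ : Equiv.Perm (ZMod p)) : TreeAut p :=
  fun v => if v = [] then σ else 1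

/-- The rooted automorphism `a` given by the `p`-cycle `σ = (0 1 … p-1)`, `x ↦ x + 1`. -/
def aAut (p : ℕ) : TreeAut p := rootedAut (Equiv.addRight (1 : ZMod p))

/-- The section `g|_x` of `g` at the first-layer vertex `x`. -/
def sect {p : ℕ} (g : TreeAut p) (x : ZMod p) : TreeAut p := fun v => g (x :: v)

/-- The `n`-th diagonal `κ_n(g) = ψ_n⁻¹(g, …, g)`. -/
def kappa {p : ℕ} (n : ℕ) (g : TreeAut p) : TreeAut p :=
  fun v => if n ≤ v.length then g (v.drop n) else 1

/-- `ψ_n⁻¹(g, 1, …, 1)`: the automorphism acting as `g` below the vertex `0^n` and trivially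
elsewhere. -/
def embAt {p : ℕ} (n : ℕ) (g : TreeAut p) : TreeAut p :=
  fun v => if List.replicate n (0 : ZMod p) <+: v then g (v.drop n) else 1

/-- The scalar product of two vectors in `𝔽_p^r`. -/
def dotp {p r : ℕ} (n m : Fin r → ZMod p) : ZMod p := ∑ j, n j * m j

/-- The directed generator `b^n` of the multi-GGS group with defining data
`e : ℤ/pℤ → 𝔽_p^r` (the columns of the matrix `E`, with `e 0 = 0`): it satisfies
`ψ_1(b^n) = (b^n, a^{n·e_1}, …, a^{n·e_{p-1}})`. -/
def bAut {p r : ℕ} (e : ZMod p → Fin r → ZMod p) (n : Fin r → ZMod p) : TreeAut p :=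
  fun v =>
    match v.getLast? with
    | none => 1
    | some i =>
      if ∀ x ∈ v.dropLast, x = 0 then Equiv.addRight (dotp n (e i)) else 1

/-- The multi-GGS group `G_E = ⟨A ∪ B⟩` associated to the data `e`. -/
def GGS {p r : ℕ} (e : ZMod p → Fin r → ZMod p) : Subgroup (TreeAut p) :=
  Subgroup.closure ({aAut p} ∪ Set.range (bAut e))

open scoped commutatorElement

/-- The element `c̲ = ψ_1⁻¹([b^{s_1}, a], 1, …, 1)`. -/
def cAut {p r : ℕ} (e : ZMod p → Fin r → ZMod p) : TreeAut p :=
  embAt 1 ⁅bAut e (fun j => if (j : ℕ) = 0 then 1 else 0), aAut p⁆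

/-- The regularisation `G_reg = ⟨G ∪ {c̲}⟩` of a multi-GGS group. -/
def GGSreg {p r : ℕ} (e : ZMod p → Fin r → ZMod p) : Subgroup (TreeAut p) :=
  Subgroup.closure ({aAut p, cAut e} ∪ Set.range (bAut e))

/-- The word length on `Aut(X*)` with respect to the generating set `A ∪ B` of the multi-GGS
group determined by `e`. -/
noncomputable def ggsLength {p r : ℕ} (e : ZMod p → Fin r → ZMod p) (g : TreeAut p) : ℕ :=
  sInf {m | ∃ l : List (TreeAut p),
    (∀ x ∈ l, x ∈ Subgroup.zpowers (aAut p) ∨ x ∈ Set.range (bAut e)) ∧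
    l.length = m ∧ l.prod = g}

/-- `e` defines a *non-constant* multi-GGS group: the defining space `E` is not the line of
constant vectors. -/
def NonConstant {p r : ℕ} (e : ZMod p → Fin r → ZMod p) : Prop :=
  (∃ i j : ZMod p, i ≠ 0 ∧ j ≠ 0 ∧ e i ≠ e j) ∧
    LinearIndependent (ZMod p) (fun j : Fin r => fun i : ZMod p => e i j)

/-- `e` defines a *symmetric* GGS group: `r = 1`, the defining space is contained in the
symmetric subspace `{λ : λ_i = λ_{p-i}}`, and the group is non-constant. -/
def IsSymmetricGGS {p r : ℕ} (e : ZMod p → Fin r → ZMod p) : Prop :=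
  r = 1 ∧ (∀ (i : ZMod p) (j : Fin r), e i j = e (-i) j) ∧ NonConstant e

/-- `e` defines a *regular* multi-GGS group: non-constant and not symmetric. -/
def IsRegularGGS {p r : ℕ} (e : ZMod p → Fin r → ZMod p) : Prop :=
  NonConstant e ∧ ¬ IsSymmetricGGS e

section Aux
variable {p r : ℕ}

theorem pact_nil {p : ℕ} (L : TreeAut p) : pact L [] = [] := rfl
theorem pact_cons {p : ℕ} (L : TreeAut p) (x v) :
    pact L (x :: v) = L [] x :: pact (fun w => L (x :: w)) v := rfl

theorem mul_apply_nil (g h : TreeAut p) : (g * h) [] = g [] * h [] := rfl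
theorem inv_apply_nil (g : TreeAut p) : g⁻¹ [] = (g [])⁻¹ := rfl
theorem sect_mul (g h : TreeAut p) (x : ZMod p) :
    sect (g * h) x = sect g (h [] x) * sect h x := rfl
theorem sect_one (x : ZMod p) : sect (1 : TreeAut p) x = 1 := rfl

theorem dotp_add (n m w : Fin r → ZMod p) : dotp (n + m) w = dotp n w + dotp m w := by
  simp [dotp, add_mul, Finset.sum_add_distrib]

theorem dotp_zero_left (w : Fin r → ZMod p) : dotp (0 : Fin r → ZMod p) w = 0 := by
  simp [dotp]

theorem dotp_zero_right (n : Fin r → ZMod p) : dotp n (0 : Fin r → ZMod p) = 0 := by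
  simp [dotp]

theorem dotp_single (j0 : Fin r) (c : ZMod p) (w : Fin r → ZMod p) :
    dotp (Pi.single j0 c) w = c * w j0 := by
  simp [dotp, Pi.single_apply, Finset.sum_ite_eq', ite_mul]

theorem addRight_mul (a b : ZMod p) :
    Equiv.addRight a * Equiv.addRight b = Equiv.addRight (b + a) := by
  ext x
  simp [Equiv.Perm.mul_apply, add_assoc]

theorem addRight_zero' : Equiv.addRight (0 : ZMod p) = 1 := by
  ext x; simp

theorem addRight_eq_one {c : ZMod p} (h : Equiv.addRight c = 1) : c = 0 := by
  have := congrArg (fun σ : Equiv.Perm (ZMod p) => σ 0) h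
  simpa using this

theorem rootedAut_one : rootedAut (1 : Equiv.Perm (ZMod p)) = 1 := by
  funext v
  simp [rootedAut, TreeAut.one_def]

theorem bAut_nil (e : ZMod p → Fin r → ZMod p) (n : Fin r → ZMod p) :
    bAut e n [] = 1 := rfl

theorem bAut_concat (e : ZMod p → Fin r → ZMod p) (n : Fin r → ZMod p)
    (l : List (ZMod p)) (i : ZMod p) :
    bAut e n (l ++ [i]) =
      if ∀ x ∈ l, x = 0 then Equiv.addRight (dotp n (e i)) else 1 := by
  simp [bAut, List.getLast?_concat, List.dropLast_concat]

end Aux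
section Aux2
variable {p r : ℕ} {e : ZMod p → Fin r → ZMod p}

theorem bAut_cons_cons_ne (n : Fin r → ZMod p) {x : ZMod p} (hx : x ≠ 0)
    (y : ZMod p) (u : List (ZMod p)) : bAut e n (x :: y :: u) = 1 := by
  rcases List.eq_nil_or_concat (y :: u) with h | ⟨l, i, h⟩
  · simp at h
  · rw [h, List.concat_eq_append, ← List.cons_append, bAut_concat, if_neg]
    intro hall
    exact hx (hall x (by simp))

theorem bAut_cons_zero (he0 : e 0 = 0) (n : Fin r → ZMod p) (w : List (ZMod p)) :
    bAut e n ((0 : ZMod p) :: w) = bAut e n w := by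
  rcases List.eq_nil_or_concat w with rfl | ⟨l, i, rfl⟩
  · show bAut e n ([] ++ [(0:ZMod p)]) = bAut e n []
    rw [bAut_concat, bAut_nil, if_pos (by simp), he0, dotp_zero_right, addRight_zero']
  · rw [List.concat_eq_append, ← List.cons_append, bAut_concat, bAut_concat]
    simp

theorem sect_b_zero (he0 : e 0 = 0) (n : Fin r → ZMod p) :
    sect (bAut e n) 0 = bAut e n := by
  funext w
  exact bAut_cons_zero he0 n w

theorem sect_b_ne (n : Fin r → ZMod p) {x : ZMod p} (hx : x ≠ 0) :
    sect (bAut e n) x = rootedAut (Equiv.addRight (dotp n (e x))) := by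
  funext w
  rcases w with _ | ⟨y, u⟩
  · show bAut e n ([] ++ [x]) = _
    rw [bAut_concat, if_pos (by simp)]
    rfl
  · rw [rootedAut]
    show bAut e n (x :: y :: u) = _
    rw [bAut_cons_cons_ne n hx]
    simp

theorem bAut_key (he0 : e 0 = 0) (n m : Fin r → ZMod p) (v : List (ZMod p)) :
    bAut e n (pact (bAut e m) v) = bAut e n v := by
  induction v with
  | nil => rfl
  | cons x w ih =>
    rw [pact_cons]
    by_cases hx : x = 0
    · subst hx
      have h1 : bAut e m [] (0 : ZMod p) = 0 := rfl
      have h2 : (fun w => bAut e m ((0:ZMod p) :: w)) = bAut e m := by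
        funext u; exact bAut_cons_zero he0 m u
      rw [h1, h2, bAut_cons_zero he0, ih, bAut_cons_zero he0]
    · have h1 : bAut e m [] x = x := rfl
      rw [h1]
      rcases w with _ | ⟨y, u⟩
      · rfl
      · exact (bAut_cons_cons_ne n hx _ _).trans (bAut_cons_cons_ne n hx _ _).symm

theorem bAut_mul (he0 : e 0 = 0) (n m : Fin r → ZMod p) :
    bAut e n * bAut e m = bAut e (n + m) := by
  funext v
  rw [TreeAut.mul_def, bAut_key he0]
  rcases List.eq_nil_or_concat v with rfl | ⟨l, i, rfl⟩
  · simp [bAut_nil]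
  · rw [List.concat_eq_append, bAut_concat, bAut_concat, bAut_concat]
    by_cases h : ∀ x ∈ l, x = 0
    · rw [if_pos h, if_pos h, if_pos h, addRight_mul, dotp_add, add_comm]
    · rw [if_neg h, if_neg h, if_neg h, mul_one]

theorem bAut_zero (he0 : e 0 = 0) : bAut e (0 : Fin r → ZMod p) = 1 := by
  funext v
  rcases List.eq_nil_or_concat v with rfl | ⟨l, i, rfl⟩
  · rfl
  · rw [List.concat_eq_append, bAut_concat, TreeAut.one_def, dotp_zero_left, addRight_zero']
    simp

theorem bAut_inv (he0 : e 0 = 0) (n : Fin r → ZMod p) :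
    (bAut e n)⁻¹ = bAut e (-n) := by
  have : bAut e n * bAut e (-n) = 1 := by
    rw [bAut_mul he0, add_neg_cancel, bAut_zero he0]
  exact (eq_inv_of_mul_eq_one_right this).symm

theorem mem_closure_bAut (he0 : e 0 = 0) (h : TreeAut p) :
    h ∈ Subgroup.closure (Set.range (bAut e)) ↔ ∃ n, bAut e n = h := by
  constructor
  · intro hh
    refine Subgroup.closure_induction (p := fun x _ => ∃ n, bAut e n = x)
      (fun x hx => hx) ⟨0, bAut_zero he0⟩ ?_ ?_ hh
    · rintro x y _ _ ⟨n, rfl⟩ ⟨m, rfl⟩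
      exact ⟨n + m, (bAut_mul he0 n m).symm⟩
    · rintro x _ ⟨n, rfl⟩
      exact ⟨-n, (bAut_inv he0 n).symm⟩
  · rintro ⟨n, rfl⟩
    exact Subgroup.subset_closure ⟨n, rfl⟩

end Aux2
section Aux3
variable {p r : ℕ} {e : ZMod p → Fin r → ZMod p}

theorem sect_inv_apply (g : TreeAut p) (x : ZMod p) :
    sect g⁻¹ (g [] x) = (sect g x)⁻¹ := by
  have h := sect_mul g⁻¹ g x
  rw [inv_mul_cancel, sect_one] at h
  exact eq_inv_of_mul_eq_one_left h.symm

theorem sect_inv_zero {g : TreeAut p} (h0 : g [] 0 = 0) :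
    sect g⁻¹ 0 = (sect g 0)⁻¹ := by
  have := sect_inv_apply g 0
  rwa [h0] at this

theorem conj_sect (he0 : e 0 = 0) (g : TreeAut p) (n : Fin r → ZMod p) :
    sect (g * bAut e n * g⁻¹) (g [] 0) =
      sect g 0 * bAut e n * (sect g 0)⁻¹ := by
  have h1 : g⁻¹ [] (g [] 0) = 0 := by
    rw [inv_apply_nil, Equiv.Perm.inv_def, Equiv.symm_apply_apply]
  have h2 : bAut e n [] (0 : ZMod p) = 0 := rfl
  rw [sect_mul, h1, sect_mul, h2, sect_b_zero he0, sect_inv_apply]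

end Aux3


/-- Let `G` be a non-constant multi-GGS group.  Then the normaliser of the directed group `B`
in `Aut(X*)` stabilises the vertex `0` of the first layer, and the section map at `0` maps
`Nor(B)` into `Nor(B)` and `Cen(B)` into `Cen(B)`. -/
theorem normalizer_directed_group (p r : ℕ) [Fact p.Prime] (hp : Odd p)
    (e : ZMod p → Fin r → ZMod p) (he0 : e 0 = 0) (hnc : NonConstant e) :
    (∀ g ∈ Subgroup.normalizer
        ((Subgroup.closure (Set.range (bAut e)) : Subgroup (TreeAut p)) : Set (TreeAut p)), g [] 0 = 0) ∧
    (∀ g ∈ Subgroup.normalizer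
        ((Subgroup.closure (Set.range (bAut e)) : Subgroup (TreeAut p)) : Set (TreeAut p)),
      sect g 0 ∈ Subgroup.normalizer
        ((Subgroup.closure (Set.range (bAut e)) : Subgroup (TreeAut p)) : Set (TreeAut p))) ∧
    (∀ g ∈ Subgroup.centralizer
        ((Subgroup.closure (Set.range (bAut e)) : Subgroup (TreeAut p)) : Set (TreeAut p)),
      sect g 0 ∈ Subgroup.centralizer
        ((Subgroup.closure (Set.range (bAut e)) : Subgroup (TreeAut p)) : Set (TreeAut p))) := by

  have key1 : ∀ g ∈ Subgroup.normalizer ((Subgroup.closure (Set.range (bAut e)) : Subgroup (TreeAut p)) : Set (TreeAut p)), g [] 0 = 0 := by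
    intro g hg
    by_contra hx0
    obtain ⟨i, j, hi, hj, hij⟩ := hnc.1
    obtain ⟨j0, hj0⟩ := Function.ne_iff.mp hij
    set n : Fin r → ZMod p := Pi.single j0 1 with hn
    have hdiff : dotp n (e i) ≠ dotp n (e j) := by
      rw [hn, dotp_single, dotp_single, one_mul, one_mul]; exact hj0
    obtain ⟨k, hk⟩ : ∃ k, dotp n (e k) ≠ 0 := by
      by_cases h : dotp n (e i) = 0
      · exact ⟨j, fun h' => hdiff (by rw [h, h'])⟩
      · exact ⟨i, h⟩
    have hbn : g * bAut e n * g⁻¹ ∈ Subgroup.closure (Set.range (bAut e)) :=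
      (Subgroup.mem_normalizer_iff.mp hg (bAut e n)).mp
        ((mem_closure_bAut he0 _).mpr ⟨n, rfl⟩)
    obtain ⟨m, hm⟩ := (mem_closure_bAut he0 _).mp hbn
    have hsec : sect (bAut e m) (g [] 0) = sect g 0 * bAut e n * (sect g 0)⁻¹ := by
      rw [hm]; exact conj_sect he0 g n
    rw [sect_b_ne m hx0] at hsec
    have h1 : Equiv.addRight (dotp m (e (g [] 0))) = 1 := by
      have h2 := congrFun hsec []
      rw [mul_apply_nil, mul_apply_nil, inv_apply_nil, bAut_nil, mul_one,
        mul_inv_cancel] at h2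
      simpa [rootedAut] using h2
    rw [addRight_eq_one h1, addRight_zero', rootedAut_one] at hsec
    have hb1 : bAut e n = 1 := by
      have h4 : sect g 0 * bAut e n * (sect g 0)⁻¹ = 1 := hsec.symm
      calc bAut e n
          = (sect g 0)⁻¹ * (sect g 0 * bAut e n * (sect g 0)⁻¹) * sect g 0 := by group
        _ = 1 := by rw [h4]; group
    have h3 : bAut e n ([] ++ [k]) = (1 : TreeAut p) ([] ++ [k]) := by rw [hb1]
    rw [bAut_concat, if_pos (by simp), TreeAut.one_def] at h3
    exact hk (addRight_eq_one h3)
  have key2 : ∀ g ∈ Subgroup.normalizer ((Subgroup.closure (Set.range (bAut e)) : Subgroup (TreeAut p)) : Set (TreeAut p)),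
      sect g 0 ∈ Subgroup.normalizer ((Subgroup.closure (Set.range (bAut e)) : Subgroup (TreeAut p)) : Set (TreeAut p)) := by
    intro g hg
    have hginv : g⁻¹ ∈ Subgroup.normalizer ((Subgroup.closure (Set.range (bAut e)) : Subgroup (TreeAut p)) : Set (TreeAut p)) :=
      inv_mem hg
    have h0 : g [] 0 = 0 := key1 g hg
    have h0' : g⁻¹ [] 0 = 0 := key1 g⁻¹ hginv
    rw [Subgroup.mem_normalizer_iff]
    intro h
    constructor
    · intro hh
      obtain ⟨n, rfl⟩ := (mem_closure_bAut he0 h).mp hh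
      have hconj : g * bAut e n * g⁻¹ ∈ Subgroup.closure (Set.range (bAut e)) :=
        (Subgroup.mem_normalizer_iff.mp hg _).mp hh
      obtain ⟨m, hm⟩ := (mem_closure_bAut he0 _).mp hconj
      have heq : sect g 0 * bAut e n * (sect g 0)⁻¹ = bAut e m := by
        have hcs := conj_sect he0 g n
        rw [h0, ← hm, sect_b_zero he0] at hcs
        exact hcs.symm
      rw [heq]
      exact (mem_closure_bAut he0 _).mpr ⟨m, rfl⟩
    · intro hh
      obtain ⟨m, hm⟩ := (mem_closure_bAut he0 _).mp hh
      have hconj : g⁻¹ * bAut e m * g ∈ Subgroup.closure (Set.range (bAut e)) := by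
        have := (Subgroup.mem_normalizer_iff.mp hginv (bAut e m)).mp
          ((mem_closure_bAut he0 _).mpr ⟨m, rfl⟩)
        rwa [inv_inv] at this
      obtain ⟨n', hn'⟩ := (mem_closure_bAut he0 _).mp hconj
      have hcs := conj_sect he0 g⁻¹ m
      rw [h0', inv_inv, ← hn', sect_b_zero he0, sect_inv_zero h0] at hcs
      -- hcs : bAut e n' = (sect g 0)⁻¹ * bAut e m * (sect g 0)⁻¹⁻¹
      have hfin : h = bAut e n' := by
        rw [hcs, hm]
        group
      rw [hfin]
      exact (mem_closure_bAut he0 _).mpr ⟨n', rfl⟩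
  refine ⟨key1, key2, ?_⟩
  intro g hg
  have hgN : g ∈ Subgroup.normalizer ((Subgroup.closure (Set.range (bAut e)) : Subgroup (TreeAut p)) : Set (TreeAut p)) := by
    rw [Subgroup.mem_normalizer_iff]
    intro h
    constructor
    · intro hh
      have hcomm := Subgroup.mem_centralizer_iff.mp hg h hh
      have hgh : g * h * g⁻¹ = h := by
        rw [← hcomm]; group
      rw [hgh]; exact hh
    · intro hh
      have hcomm := Subgroup.mem_centralizer_iff.mp hg _ hh
      have hgh : h = g * h * g⁻¹ := by
        calc h = g⁻¹ * (g * h * g⁻¹ * g) := by group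
          _ = g⁻¹ * (g * (g * h * g⁻¹)) := by rw [hcomm]
          _ = g * h * g⁻¹ := by group
      rw [hgh]; exact hh
  have h0 : g [] 0 = 0 := key1 g hgN
  rw [Subgroup.mem_centralizer_iff]
  intro h hh
  obtain ⟨n, rfl⟩ := (mem_closure_bAut he0 h).mp hh
  have hc : bAut e n * g = g * bAut e n :=
    Subgroup.mem_centralizer_iff.mp hg _ ((mem_closure_bAut he0 _).mpr ⟨n, rfl⟩)
  have h1 : sect (bAut e n * g) 0 = bAut e n * sect g 0 := by
    rw [sect_mul, h0, sect_b_zero he0]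
  have h2 : sect (g * bAut e n) 0 = sect g 0 * bAut e n := by
    have hb0 : bAut e n [] (0 : ZMod p) = 0 := rfl
    rw [sect_mul, hb0, sect_b_zero he0]
  rw [← h1, ← h2, hc]
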